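/- Let A be an n×n complex matrix, B an n×m complex matrix, C an m×n complex matrix, and D an m×m complex matrix, and suppose the (n+m)×(n+m) block matrix [[A, B], [C, D]] is unitary, i.e. [[Aᴴ, Cᴴ], [Bᴴ, Dᴴ]] · [[A, B], [C, D]] = I. If D is invertible, then A is invertible and A − BD⁻¹C = (Aᴴ)⁻¹. -/

import Mathlib

open Matrix

/-- If the block matrix `[[A, B], [C, D]]` is unitary (its conjugate transpose
times itself is the identity) and `D` is invertible, then `A` is invertible and
`A − B D⁻¹ C = (Aᴴ)⁻¹`. -/
theorem stmt4 {n m : ℕ} (A : Matrix (Fin n) (Fin n) ℂ)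
    (B : Matrix (Fin n) (Fin m) ℂ) (C : Matrix (Fin m) (Fin n) ℂ)
    (D : Matrix (Fin m) (Fin m) ℂ)
    (hU : (Matrix.fromBlocks A B C D)ᴴ * Matrix.fromBlocks A B C D = 1)
    (hD : IsUnit D) :
    IsUnit A ∧ A - B * D⁻¹ * C = (Aᴴ)⁻¹ := by
  have hU' : Matrix.fromBlocks A B C D * (Matrix.fromBlocks A B C D)ᴴ = 1 :=
    mul_eq_one_comm.mp hU
  rw [fromBlocks_conjTranspose, fromBlocks_multiply] at hU'
  have hone1 : Matrix.toBlocks₁₁ (1 : Matrix (Fin n ⊕ Fin m) (Fin n ⊕ Fin m) ℂ) = 1 := by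
    ext i j; simp [Matrix.toBlocks₁₁, Matrix.one_apply]
  have hone2 : Matrix.toBlocks₂₁ (1 : Matrix (Fin n ⊕ Fin m) (Fin n ⊕ Fin m) ℂ) = 0 := by
    ext i j; simp [Matrix.toBlocks₂₁, Matrix.one_apply]
  have h11 : A * Aᴴ + B * Bᴴ = 1 := by
    have := congrArg Matrix.toBlocks₁₁ hU'
    rwa [Matrix.toBlocks_fromBlocks₁₁, hone1] at this
  have h21 : C * Aᴴ + D * Bᴴ = 0 := by
    have := congrArg Matrix.toBlocks₂₁ hU'
    rwa [Matrix.toBlocks_fromBlocks₂₁, hone2] at this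
  have hDinv : D⁻¹ * D = 1 :=
    Matrix.nonsing_inv_mul D ((Matrix.isUnit_iff_isUnit_det D).mp hD)
  have hCA : C * Aᴴ = -(D * Bᴴ) := eq_neg_of_add_eq_zero_left h21
  have key : (A - B * D⁻¹ * C) * Aᴴ = 1 := by
    calc (A - B * D⁻¹ * C) * Aᴴ
        = A * Aᴴ - B * D⁻¹ * (C * Aᴴ) := by
          rw [Matrix.sub_mul, Matrix.mul_assoc (B * D⁻¹)]
      _ = A * Aᴴ + B * (D⁻¹ * D) * Bᴴ := by
          rw [hCA, Matrix.mul_neg, sub_neg_eq_add]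
          simp [Matrix.mul_assoc]
      _ = 1 := by rw [hDinv, Matrix.mul_one, h11]
  have hAH : IsUnit Aᴴ := by
    rw [Matrix.isUnit_iff_isUnit_det]
    have := congrArg Matrix.det key
    rw [Matrix.det_mul, Matrix.det_one] at this
    exact IsUnit.of_mul_eq_one _ (mul_comm (A - B * D⁻¹ * C).det Aᴴ.det ▸ this)
  have hA : IsUnit A := by
    rw [Matrix.isUnit_iff_isUnit_det] at hAH ⊢
    simpa [Matrix.det_conjTranspose, isUnit_iff_ne_zero, star_eq_zero] using hAH
  exact ⟨hA, (Matrix.inv_eq_left_inv key).symm⟩
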